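/- Fix x ∈ ℝ. With c_n = 2 − 2b_n^{−2} and d_n = b_n² − 2b_n^{−2}, as n → ∞, n · (d/dx) Φ((c_n x + d_n)^{1/2}) = e^{−x} ( 1 + b_n^{−4} (1/2 + x + x²) − b_n^{−6} (1/3 + 2x + 2x² + (4/3) x³) + O(b_n^{−8}) ), where the derivative in x equals 2^{−1} n c_n (c_n x + d_n)^{−1/2} φ((c_n x + d_n)^{1/2}) and is defined for n large enough that c_n x + d_n > 0. -/

import Mathlib

open Real Filter Topology

/-- The standard normal distribution function. -/
noncomputable def stdNormalCDF (x : ℝ) : ℝ :=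
  ∫ u in Set.Iic x, Real.exp (-u ^ 2 / 2) / Real.sqrt (2 * Real.pi)

/-- The standard normal density. -/
noncomputable def stdNormalPDF (x : ℝ) : ℝ :=
  Real.exp (-x ^ 2 / 2) / Real.sqrt (2 * Real.pi)

open MeasureTheory

set_option maxHeartbeats 4000000

lemma integrable_pdf : Integrable stdNormalPDF := by
  have h : Integrable (fun u : ℝ => Real.exp (-(1/2) * u ^ 2)) := integrable_exp_neg_mul_sq (by norm_num)
  have := h.div_const (Real.sqrt (2 * Real.pi))
  refine this.congr (Eventually.of_forall fun u => ?_)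
  simp [stdNormalPDF]; ring_nf

lemma continuous_pdf : Continuous stdNormalPDF := by
  unfold stdNormalPDF; fun_prop

lemma hasDerivAt_cdf (t : ℝ) : HasDerivAt stdNormalCDF (stdNormalPDF t) t := by
  have key : ∀ s : ℝ, stdNormalCDF s = stdNormalCDF 0 + ∫ u in (0:ℝ)..s, stdNormalPDF u := by
    intro s
    have := intervalIntegral.integral_Iic_sub_Iic (μ := volume) (f := stdNormalPDF)
      (integrable_pdf.integrableOn) (integrable_pdf.integrableOn) (a := 0) (b := s)
    have h2 : stdNormalCDF s - stdNormalCDF 0 = ∫ u in (0:ℝ)..s, stdNormalPDF u := this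
    linarith
  have hD : HasDerivAt (fun s => ∫ u in (0:ℝ)..s, stdNormalPDF u) (stdNormalPDF t) t :=
    intervalIntegral.integral_hasDerivAt_right
      (integrable_pdf.intervalIntegrable)
      (continuous_pdf.aestronglyMeasurable.stronglyMeasurableAtFilter)
      (continuous_pdf.continuousAt)
  have := (hD.const_add (stdNormalCDF 0))
  refine this.congr_of_eventuallyEq (Eventually.of_forall fun s => (key s))

lemma my_deriv_comp (c d x : ℝ) (hs : 0 < c * x + d) :
    HasDerivAt (fun y : ℝ => stdNormalCDF ((c * y + d) ^ ((1 : ℝ) / 2)))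
      ((2 : ℝ)⁻¹ * c * (c * x + d) ^ (-(1 : ℝ) / 2) *
        stdNormalPDF ((c * x + d) ^ ((1 : ℝ) / 2))) x := by
  have hlin : HasDerivAt (fun y : ℝ => c * y + d) c x := by
    simpa using ((hasDerivAt_id x).const_mul c).add_const d
  have hr : HasDerivAt (fun y : ℝ => (c * y + d) ^ ((1 : ℝ) / 2))
      (c * ((1:ℝ)/2) * (c * x + d) ^ ((1:ℝ)/2 - 1)) x :=
    hlin.rpow_const (Or.inl (ne_of_gt hs))
  have := (hasDerivAt_cdf ((c * x + d) ^ ((1 : ℝ) / 2))).comp x hr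
  refine this.congr_deriv ?_
  rw [show ((1:ℝ)/2 - 1) = -(1:ℝ)/2 by norm_num]
  ring

lemma horner_abs_le {u p q M' : ℝ} (hu0 : 0 ≤ u) (hu1 : u ≤ 1) (hq : |q| ≤ M') :
    |p + u * q| ≤ |p| + M' := by
  calc |p + u*q| ≤ |p| + |u*q| := abs_add_le _ _
  _ = |p| + u*|q| := by rw [abs_mul, abs_of_nonneg hu0]
  _ ≤ |p| + M' := by nlinarith [abs_nonneg q]

lemma estQ (x u : ℝ) (hu : 0 < u) (h1 : u * (8*(1+|x|)) ≤ 1) :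
    1/4 ≤ 1 + 2*x*u - (2*x+2)*u^2 := by
  have hm : 0 ≤ |x| := abs_nonneg x
  have hmx : x ≤ |x| := le_abs_self x
  have hmx' : -|x| ≤ x := neg_abs_le x
  have hu1 : u ≤ 1 := by nlinarith
  nlinarith [mul_nonneg hu.le hm, mul_nonneg (mul_nonneg hu.le hu.le) hm,
    mul_nonneg hu.le hu.le]

lemma estP' (A B u : ℝ) (hu : 0 < u) (hu1 : u ≤ 1)
    (h2 : u * (2*(|A| + |B|)+2) ≤ 1) :
    1/2 ≤ 1 + A * u^2 - B * u^3 := by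
  have habs : |A - B*u| ≤ |A| + |B| := by
    calc |A - B*u| ≤ |A| + |B*u| := abs_sub _ _
      _ ≤ |A| + |B| := by
          rw [abs_mul, abs_of_nonneg hu.le]
          nlinarith [abs_nonneg B]
  have h3 := neg_abs_le (A - B*u)
  have hyK : -(|A| + |B|) ≤ A - B*u := by linarith
  have h6 := mul_le_mul_of_nonneg_left hyK (sq_nonneg u)
  have hu2le : u^2 ≤ u := by nlinarith
  have hK0 : 0 ≤ |A| + |B| := by positivity
  have h4 : u^2 * (|A| + |B|) ≤ u * (|A| + |B|) := mul_le_mul_of_nonneg_right hu2le hK0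
  have h5 : u * (|A| + |B|) ≤ 1/2 := by nlinarith
  nlinarith [h6]

lemma estP (x u : ℝ) (hu : 0 < u) (hu1 : u ≤ 1)
    (h2 : u * (2*(|1/2 + x + x^2| + |1/3 + 2*x + 2*x^2 + 4/3*x^3|)+2) ≤ 1) :
    1/2 ≤ 1 + (1/2 + x + x^2) * u^2 - (1/3 + 2*x + 2*x^2 + 4/3*x^3) * u^3 :=
  estP' _ _ u hu hu1 h2

lemma identT (x u : ℝ) :
    (1-u)^2 * (1 + 2*(x+1)*u + 2*(x+1)^2*u^2 + 4/3*(x+1)^3*u^3)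
      - (1 + (1/2 + x + x^2) * u^2 - (1/3 + 2*x + 2*x^2 + 4/3*x^3) * u^3)^2
        * (1 + 2*x*u - (2*x+2)*u^2)
    = u^4 * ((13/12 + 7/3*x + 8*x^2 + 22/3*x^3 + 13/3*x^4)
      + u * ((1/3 - 19/6*x - 22/3*x^2 - 20/3*x^3 - 8/3*x^4 + 2/3*x^5)
      + u * ((7/18 + 11/6*x + 6*x^2 + 112/9*x^3 + 46/3*x^4 + 10*x^5 + 32/9*x^6)
      + u * ((-2/3 - 56/9*x - 64/3*x^2 - 128/3*x^3 - 448/9*x^4 - 112/3*x^5 - 16*x^6 - 32/9*x^7)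
      + u * (2/9 + 26/9*x + 40/3*x^2 + 256/9*x^3 + 328/9*x^4 + 88/3*x^5 + 128/9*x^6 + 32/9*x^7))))) := by
  ring

lemma westimate (x u : ℝ) (hu0 : 0 ≤ u) (hu1 : u ≤ 1) :
    |(13/12 + 7/3*x + 8*x^2 + 22/3*x^3 + 13/3*x^4)
      + u * ((1/3 - 19/6*x - 22/3*x^2 - 20/3*x^3 - 8/3*x^4 + 2/3*x^5)
      + u * ((7/18 + 11/6*x + 6*x^2 + 112/9*x^3 + 46/3*x^4 + 10*x^5 + 32/9*x^6)
      + u * ((-2/3 - 56/9*x - 64/3*x^2 - 128/3*x^3 - 448/9*x^4 - 112/3*x^5 - 16*x^6 - 32/9*x^7)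
      + u * (2/9 + 26/9*x + 40/3*x^2 + 256/9*x^3 + 328/9*x^4 + 88/3*x^5 + 128/9*x^6 + 32/9*x^7))))|
    ≤ |13/12 + 7/3*x + 8*x^2 + 22/3*x^3 + 13/3*x^4|
      + (|1/3 - 19/6*x - 22/3*x^2 - 20/3*x^3 - 8/3*x^4 + 2/3*x^5|
      + (|7/18 + 11/6*x + 6*x^2 + 112/9*x^3 + 46/3*x^4 + 10*x^5 + 32/9*x^6|
      + (|-2/3 - 56/9*x - 64/3*x^2 - 128/3*x^3 - 448/9*x^4 - 112/3*x^5 - 16*x^6 - 32/9*x^7|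
      + |2/9 + 26/9*x + 40/3*x^2 + 256/9*x^3 + 328/9*x^4 + 88/3*x^5 + 128/9*x^6 + 32/9*x^7|))) := by
  refine horner_abs_le hu0 hu1 ?_
  refine horner_abs_le hu0 hu1 ?_
  refine horner_abs_le hu0 hu1 ?_
  exact horner_abs_le hu0 hu1 le_rfl

lemma exp_cubic_est (t : ℝ) (ht : |t| ≤ 1) :
    |Real.exp t - (1 + t + t^2/2 + t^3/6)| ≤ |t|^4 := by
  have h := Real.exp_bound ht (n := 4) (by norm_num)
  have hsum : ∑ m ∈ Finset.range 4, t ^ m / m.factorial = 1 + t + t^2/2 + t^3/6 := by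
    norm_num [Finset.sum_range_succ, Nat.factorial]
    try ring
  rw [hsum] at h
  have h4 : (0:ℝ) ≤ |t|^4 := by positivity
  calc |Real.exp t - (1 + t + t^2/2 + t^3/6)| ≤ |t|^4 * ((4:ℕ).succ / ((4:ℕ).factorial * 4)) := h
    _ ≤ |t|^4 := by
        have : ((4:ℕ).succ / ((4:ℕ).factorial * 4) : ℝ) = 5/96 := by norm_num [Nat.factorial]
        rw [this]; linarith

lemma key_analytic (x : ℝ) :
    ∃ C > (0:ℝ), ∃ u₀ > (0:ℝ), ∀ u : ℝ, 0 < u → u ≤ u₀ →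
      1/4 ≤ 1 + 2*x*u - (2*x+2)*u^2 ∧
      |(1 - u) * Real.exp ((x+1) * u) / Real.sqrt (1 + 2*x*u - (2*x+2)*u^2) -
        (1 + (1/2 + x + x^2) * u^2 - (1/3 + 2*x + 2*x^2 + 4/3*x^3) * u^3)| ≤ C * u^4 := by
  set M : ℝ := 1 + |x| with hMdef
  set K : ℝ := |1/2 + x + x^2| + |1/3 + 2*x + 2*x^2 + 4/3*x^3| with hKdef
  set CW : ℝ := |13/12 + 7/3*x + 8*x^2 + 22/3*x^3 + 13/3*x^4|
      + (|1/3 - 19/6*x - 22/3*x^2 - 20/3*x^3 - 8/3*x^4 + 2/3*x^5|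
      + (|7/18 + 11/6*x + 6*x^2 + 112/9*x^3 + 46/3*x^4 + 10*x^5 + 32/9*x^6|
      + (|-2/3 - 56/9*x - 64/3*x^2 - 128/3*x^3 - 448/9*x^4 - 112/3*x^5 - 16*x^6 - 32/9*x^7|
      + |2/9 + 26/9*x + 40/3*x^2 + 256/9*x^3 + 328/9*x^4 + 88/3*x^5 + 128/9*x^6 + 32/9*x^7|))) with hCWdef
  clear_value M K CW
  have hM1 : (1:ℝ) ≤ M := by rw [hMdef]; have := abs_nonneg x; linarith
  have hMpos : (0:ℝ) < M := by linarith
  have hK0 : (0:ℝ) ≤ K := by rw [hKdef]; positivity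
  have hCW0 : (0:ℝ) ≤ CW := by rw [hCWdef]; positivity
  refine ⟨8*(16*M^4 + CW) + 1, by positivity, min (1/(8*M)) (1/(2*K+2)), by positivity, ?_⟩
  intro u hu hu0
  have hu1 : u ≤ 1/(8*M) := le_trans hu0 (min_le_left _ _)
  have hu2 : u ≤ 1/(2*K+2) := le_trans hu0 (min_le_right _ _)
  have hu1' : u * (8*M) ≤ 1 := by rw [le_div_iff₀ (by positivity)] at hu1; linarith
  have hu2' : u * (2*K+2) ≤ 1 := by rw [le_div_iff₀ (by positivity)] at hu2; linarith
  have h8M : (8:ℝ) ≤ 8*M := by linarith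
  have h8u := mul_le_mul_of_nonneg_left h8M hu.le
  have hule1 : u ≤ 1 := by nlinarith
  set Q : ℝ := 1 + 2*x*u - (2*x+2)*u^2 with hQdef
  set P : ℝ := 1 + (1/2 + x + x^2) * u^2 - (1/3 + 2*x + 2*x^2 + 4/3*x^3) * u^3 with hPdef
  set G : ℝ := (1 - u) * Real.exp ((x+1) * u) / Real.sqrt Q with hGdef
  clear_value Q P G
  have hQ : (1:ℝ)/4 ≤ Q := by
    rw [hQdef]; exact estQ x u hu (by rw [hMdef] at hu1'; linarith)
  have hQpos : (0:ℝ) < Q := by linarith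
  have hsQ : (1:ℝ)/2 ≤ Real.sqrt Q := by
    rw [show (1:ℝ)/2 = Real.sqrt (1/4) by
      rw [show (1:ℝ)/4 = (1/2)^2 by norm_num, Real.sqrt_sq]; norm_num]
    exact Real.sqrt_le_sqrt hQ
  have hP : (1:ℝ)/2 ≤ P := by
    rw [hPdef]; exact estP x u hu hule1 (by rw [hKdef] at hu2'; linarith)
  have hG0 : (0:ℝ) ≤ G := by
    rw [hGdef]
    have h1u : (0:ℝ) ≤ 1 - u := by linarith
    positivity
  have hGPpos : (0:ℝ) < G + P := by linarith
  have hGsq : G^2 = (1-u)^2 * Real.exp (2*(x+1)*u) / Q := by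
    have hE : Real.exp ((x+1)*u)^2 = Real.exp (2*(x+1)*u) := by
      rw [sq, ← Real.exp_add]; ring_nf
    rw [hGdef, div_pow, mul_pow, Real.sq_sqrt hQpos.le, hE]
  set T : ℝ := 1 + 2*(x+1)*u + 2*(x+1)^2*u^2 + 4/3*(x+1)^3*u^3 with hTdef
  set R : ℝ := Real.exp (2*(x+1)*u) - T with hRdef
  set W : ℝ := (13/12 + 7/3*x + 8*x^2 + 22/3*x^3 + 13/3*x^4)
      + u * ((1/3 - 19/6*x - 22/3*x^2 - 20/3*x^3 - 8/3*x^4 + 2/3*x^5)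
      + u * ((7/18 + 11/6*x + 6*x^2 + 112/9*x^3 + 46/3*x^4 + 10*x^5 + 32/9*x^6)
      + u * ((-2/3 - 56/9*x - 64/3*x^2 - 128/3*x^3 - 448/9*x^4 - 112/3*x^5 - 16*x^6 - 32/9*x^7)
      + u * (2/9 + 26/9*x + 40/3*x^2 + 256/9*x^3 + 328/9*x^4 + 88/3*x^5 + 128/9*x^6 + 32/9*x^7)))) with hWdef
  clear_value T R W
  -- bound on R
  have hxa : |x+1| ≤ M := by
    rw [hMdef]
    calc |x+1| ≤ |x| + |(1:ℝ)| := abs_add_le _ _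
      _ = 1 + |x| := by rw [abs_one]; ring
  have habs_t : |2 * (x+1) * u| = 2*|x+1| * u := by
    rw [abs_mul, abs_mul, abs_of_nonneg hu.le, abs_two]
  have hMu : 2*|x+1| * u ≤ 2*M*u := by
    have := mul_le_mul_of_nonneg_right hxa hu.le
    linarith
  have h2Mu : 2*M*u ≤ 1 := by linarith [hu1']
  have h2au : |2 * (x+1) * u| ≤ 1 := by rw [habs_t]; linarith
  have hRb : |R| ≤ 16*M^4*u^4 := by
    have hexp := exp_cubic_est (2*(x+1)*u) h2au
    have hTt : 1 + (2*(x+1)*u) + (2*(x+1)*u)^2/2 + (2*(x+1)*u)^3/6 = T := by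
      rw [hTdef]; ring
    rw [hTt] at hexp
    have h1 : |2 * (x+1) * u|^4 ≤ (2*M*u)^4 := by
      apply pow_le_pow_left₀ (abs_nonneg _)
      rw [habs_t]; linarith
    have h2 : (2*M*u)^4 = 16*M^4*u^4 := by ring
    rw [← hRdef] at hexp
    linarith
  set num : ℝ := (1-u)^2 * Real.exp (2*(x+1)*u) - P^2*Q with hnumdef
  clear_value num
  have hnum_eq : num = u^4 * W + (1-u)^2 * R := by
    rw [hnumdef, hRdef, hTdef, hWdef, hPdef, hQdef]; ring
  have hWb : |W| ≤ CW := by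
    rw [hWdef, hCWdef]; exact westimate x u hu.le hule1
  have h1usq : (1-u)^2 ≤ 1 := by nlinarith
  have hnumb : |num| ≤ u^4*(16*M^4 + CW) := by
    have t0 : |num| ≤ |u ^ 4 * W| + |(1 - u) ^ 2 * R| := by
      rw [hnum_eq]; exact abs_add_le _ _
    have t0' : |u ^ 4 * W| = u^4*|W| := by
      rw [abs_mul, abs_of_nonneg (by positivity : (0:ℝ) ≤ u^4)]
    have t0'' : |(1 - u) ^ 2 * R| = (1-u)^2*|R| := by
      rw [abs_mul, abs_of_nonneg (sq_nonneg (1-u))]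
    have t1 : u^4*|W| ≤ u^4*CW := mul_le_mul_of_nonneg_left hWb (by positivity)
    have t2 : (1-u)^2*|R| ≤ 1*(16*M^4*u^4) :=
      mul_le_mul h1usq hRb (abs_nonneg R) one_pos.le
    linarith
  have hG2P2 : G^2 - P^2 = num / Q := by
    rw [hGsq, hnumdef]
    field_simp
  have habs2 : |G^2 - P^2| ≤ 4*|num| := by
    rw [hG2P2, abs_div, abs_of_pos hQpos, div_le_iff₀ hQpos]
    have := mul_le_mul_of_nonneg_left hQ (abs_nonneg num)
    linarith
  have hGP_eq : G - P = (G^2 - P^2)/(G+P) := by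
    rw [eq_div_iff (ne_of_gt hGPpos)]; ring
  have hfinal : |G - P| ≤ 2*|G^2 - P^2| := by
    rw [hGP_eq, abs_div, abs_of_pos hGPpos, div_le_iff₀ hGPpos]
    have := mul_le_mul_of_nonneg_left (show (1:ℝ)/2 ≤ G + P by linarith) (abs_nonneg (G^2-P^2))
    linarith
  have hu4 : (0:ℝ) < u^4 := by positivity
  refine ⟨hQ, ?_⟩
  calc |G - P| ≤ 2*|G^2 - P^2| := hfinal
    _ ≤ 8*|num| := by linarith
    _ ≤ 8*(u^4*(16*M^4 + CW)) := by linarith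
    _ ≤ (8*(16*M^4 + CW) + 1) * u^4 := by linarith

/-- Lemma 3.3, `t = 2`: With `b_n` the unique positive solution of
`2π b_n² exp(b_n²) = n²`, `c_n = 2 − 2b_n^{−2}` and `d_n = b_n² − 2b_n^{−2}`:
`n (d/dx) Φ((c_n x + d_n)^{1/2}) = e^{−x}(1 + b_n^{−4}(1/2 + x + x²)
  − b_n^{−6}(1/3 + 2x + 2x² + (4/3)x³) + O(b_n^{−8}))`,
the derivative being `2⁻¹ n c_n (c_n x + d_n)^{−1/2} φ((c_n x + d_n)^{1/2})`. -/
theorem powered_extremes_cdf_deriv_expansion_t_eq_two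
    (b : ℕ → ℝ)
    (hb : ∀ n : ℕ, 1 ≤ n → 0 < b n ∧
      2 * Real.pi * (b n) ^ 2 * Real.exp ((b n) ^ 2) = (n : ℝ) ^ 2)
    (x : ℝ)
    (c d : ℕ → ℝ)
    (hc : ∀ n : ℕ, c n = 2 - 2 / (b n) ^ 2)
    (hd : ∀ n : ℕ, d n = (b n) ^ 2 - 2 / (b n) ^ 2) :
    ∃ C > (0 : ℝ), ∃ N : ℕ, ∀ n : ℕ, N ≤ n →
      0 < c n * x + d n ∧
      deriv (fun y : ℝ => stdNormalCDF ((c n * y + d n) ^ ((1 : ℝ) / 2))) x =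
        (2 : ℝ)⁻¹ * c n * (c n * x + d n) ^ (-(1 : ℝ) / 2) *
          stdNormalPDF ((c n * x + d n) ^ ((1 : ℝ) / 2)) ∧
      |(n : ℝ) * Real.exp x *
          deriv (fun y : ℝ => stdNormalCDF ((c n * y + d n) ^ ((1 : ℝ) / 2))) x -
        (1 + (1 / 2 + x + x ^ 2) / (b n) ^ 4 -
          (1 / 3 + 2 * x + 2 * x ^ 2 + 4 / 3 * x ^ 3) / (b n) ^ 6)|
      ≤ C / (b n) ^ 8 := by
  obtain ⟨C, hC, u₀, hu₀, hkey⟩ := key_analytic x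
  set B : ℝ := max 1 (1/u₀) with hBdef
  have hB1 : (1:ℝ) ≤ B := le_max_left _ _
  have hBu : 1/u₀ ≤ B := le_max_right _ _
  have hBpos : (0:ℝ) < B := by linarith
  obtain ⟨N₀, hN₀⟩ := exists_nat_gt (2 * Real.pi * B^2 * Real.exp (B^2))
  refine ⟨C, hC, N₀ + 1, ?_⟩
  intro n hn
  have hn1 : 1 ≤ n := le_trans (by omega) hn
  obtain ⟨hbpos, hbeq⟩ := hb n hn1
  have hncast : (N₀:ℝ) + 1 ≤ (n:ℝ) := by exact_mod_cast hn
  have hn1c : (1:ℝ) ≤ (n:ℝ) := by exact_mod_cast hn1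
  -- b n ≥ B
  have hbB : B ≤ b n := by
    by_contra h
    push_neg at h
    have h1 : (b n)^2 < B^2 := by nlinarith
    have h2 : Real.exp ((b n)^2) < Real.exp (B^2) := Real.exp_lt_exp.mpr h1
    have h3 : (n:ℝ)^2 < 2 * Real.pi * B^2 * Real.exp (B^2) := by
      rw [← hbeq]
      have hpi := Real.pi_pos
      have := mul_lt_mul'' (show 2 * Real.pi * (b n)^2 < 2 * Real.pi * B^2 by nlinarith)
        h2 (by positivity) (Real.exp_pos _).le
      linarith
    nlinarith
  have hb1 : (1:ℝ) ≤ b n := le_trans hB1 hbB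
  have hbne : b n ≠ 0 := by linarith
  set u : ℝ := 1/(b n)^2 with hudef
  have hupos : 0 < u := by rw [hudef]; positivity
  have huu0 : u ≤ u₀ := by
    have hb2 : 1/u₀ ≤ (b n)^2 := by nlinarith
    rw [hudef]
    rw [div_le_iff₀ (by positivity)]
    rw [div_le_iff₀ hu₀] at hb2
    linarith
  obtain ⟨hQ4, hbound⟩ := hkey u hupos huu0
  set Q' : ℝ := 1 + 2*x*u - (2*x+2)*u^2 with hQ'def
  have hQ'pos : 0 < Q' := by linarith
  have hsQ'pos : 0 < Real.sqrt Q' := Real.sqrt_pos.mpr hQ'pos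
  have hQu : c n * x + d n = (b n)^2 * Q' := by
    rw [hc, hd, hQ'def, hudef]; field_simp; ring
  have hs : 0 < c n * x + d n := by rw [hQu]; positivity
  have hder := my_deriv_comp (c n) (d n) x hs
  have hder2 : deriv (fun y : ℝ => stdNormalCDF ((c n * y + d n) ^ ((1 : ℝ) / 2))) x =
      (2 : ℝ)⁻¹ * c n * (c n * x + d n) ^ (-(1 : ℝ) / 2) *
        stdNormalPDF ((c n * x + d n) ^ ((1 : ℝ) / 2)) := hder.deriv
  refine ⟨hs, hder2, ?_⟩
  set s : ℝ := c n * x + d n with hsdef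
  -- basic identities
  have hsqpow : (s ^ ((1:ℝ)/2))^2 = s := by
    rw [← Real.rpow_natCast (s ^ ((1:ℝ)/2)) 2, ← Real.rpow_mul hs.le]
    norm_num
  have hpdf : stdNormalPDF (s ^ ((1:ℝ)/2)) = Real.exp (-s/2) / Real.sqrt (2*Real.pi) := by
    unfold stdNormalPDF
    rw [hsqpow]
  have hneg : s ^ (-(1:ℝ)/2) = (Real.sqrt s)⁻¹ := by
    rw [show (-(1:ℝ)/2) = -((1:ℝ)/2) by norm_num, Real.rpow_neg hs.le, Real.sqrt_eq_rpow]
  have h2pi : (0:ℝ) < 2 * Real.pi := by positivity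
  have hnval : (n:ℝ) = Real.sqrt (2*Real.pi) * b n * Real.exp ((b n)^2/2) := by
    have h1 : (n:ℝ) = Real.sqrt ((n:ℝ)^2) := (Real.sqrt_sq (n.cast_nonneg)).symm
    rw [h1, ← hbeq]
    have hE : Real.exp ((b n)^2/2)^2 = Real.exp ((b n)^2) := by
      rw [sq, ← Real.exp_add]; ring_nf
    rw [show 2*Real.pi*(b n)^2*Real.exp ((b n)^2)
        = (Real.sqrt (2*Real.pi) * b n * Real.exp ((b n)^2/2))^2 by
      rw [mul_pow, mul_pow, Real.sq_sqrt h2pi.le, hE]]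
    exact Real.sqrt_sq (by positivity)
  have hss : Real.sqrt s = b n * Real.sqrt Q' := by
    rw [hQu, Real.sqrt_mul (sq_nonneg (b n)), Real.sqrt_sq hbpos.le]
  have hexps : Real.exp ((b n)^2/2) * Real.exp x * Real.exp (-s/2) = Real.exp ((x+1)*u) := by
    rw [← Real.exp_add, ← Real.exp_add]
    congr 1
    rw [hsdef, hc, hd, hudef]
    field_simp
    ring
  have hcn : c n = 2*(1-u) := by rw [hc, hudef]; ring
  have hsqrt2pine : Real.sqrt (2*Real.pi) ≠ 0 := by positivity
  have hF : (n:ℝ) * Real.exp x *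
      ((2 : ℝ)⁻¹ * c n * s ^ (-(1:ℝ)/2) * stdNormalPDF (s ^ ((1:ℝ)/2)))
      = (1-u) * Real.exp ((x+1)*u) / Real.sqrt Q' := by
    rw [hpdf, hneg, hss, hnval, hcn, ← hexps]
    field_simp
  have hPmatch : 1 + (1/2 + x + x^2)/(b n)^4 - (1/3 + 2*x + 2*x^2 + 4/3*x^3)/(b n)^6
      = 1 + (1/2 + x + x^2) * u^2 - (1/3 + 2*x + 2*x^2 + 4/3*x^3) * u^3 := by
    rw [hudef]; ring
  have hCmatch : C/(b n)^8 = C * u^4 := by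
    rw [hudef]; ring
  rw [hder2, hF, hPmatch, hCmatch]
  exact hbound
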